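/- RKL/FKL ratio bound: for probability distributions P ≠ Q on a finite set with mutual absolute continuity, letting κ(t) = (t log t + 1 − t)/(t − 1 − log t) and β₁ = exp(−D_∞(P‖Q)) where D_∞(P‖Q) = log max_i p_i/q_i, one has KL(P‖Q) ≤ κ(β₁⁻¹)·KL(Q‖P). -/

import Mathlib

open Finset

noncomputable def kappa (t : ℝ) : ℝ :=
  (t * Real.log t + 1 - t) / (t - 1 - Real.log t)

section Aux

noncomputable def phiF (t : ℝ) : ℝ := t * Real.log t + 1 - t
noncomputable def psiF (t : ℝ) : ℝ := t - 1 - Real.log t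

lemma psiF_nonneg {t : ℝ} (ht : 0 < t) : 0 ≤ psiF t := by
  have := Real.log_le_sub_one_of_pos ht
  simp only [psiF]; linarith

lemma psiF_pos {t : ℝ} (ht : 0 < t) (ht1 : t ≠ 1) : 0 < psiF t := by
  have := Real.log_lt_sub_one_of_pos ht ht1
  simp only [psiF]; linarith

lemma phiF_nonneg {t : ℝ} (ht : 0 < t) : 0 ≤ phiF t := by
  have h := psiF_nonneg (t := 1/t) (one_div_pos.2 ht)
  simp only [psiF, phiF, one_div, Real.log_inv] at *
  have : 0 ≤ t * (t⁻¹ - 1 + Real.log t) := by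
    apply mul_nonneg ht.le; linarith
  have ht' : t * t⁻¹ = 1 := mul_inv_cancel₀ ht.ne'
  nlinarith

lemma phiF_pos {t : ℝ} (ht : 0 < t) (ht1 : t ≠ 1) : 0 < phiF t := by
  have h := psiF_pos (t := 1/t) (one_div_pos.2 ht) (by
    rw [one_div, ne_eq, inv_eq_one]; exact ht1)
  simp only [psiF, phiF, one_div, Real.log_inv] at *
  have : 0 < t * (t⁻¹ - 1 + Real.log t) := by
    apply mul_pos ht; linarith
  have ht' : t * t⁻¹ = 1 := mul_inv_cancel₀ ht.ne'
  nlinarith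

/-- the function (1+t) log t - 2(t-1) -/
noncomputable def qF (t : ℝ) : ℝ := (1 + t) * Real.log t - 2 * (t - 1)

lemma hasDerivAt_qF {x : ℝ} (hx : 0 < x) :
    HasDerivAt qF (Real.log x + (1 + x) / x - 2) x := by
  have h1 : HasDerivAt (fun t : ℝ => (1 + t) * Real.log t)
      (1 * Real.log x + (1 + x) * x⁻¹) x :=
    ((hasDerivAt_id x).const_add 1).mul (Real.hasDerivAt_log hx.ne')
  have h2 : HasDerivAt (fun t : ℝ => 2 * (t - 1)) 2 x := by
    simpa using ((hasDerivAt_id x).sub_const 1).const_mul 2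
  have := h1.sub h2
  rw [show Real.log x + (1 + x) / x - 2 = 1 * Real.log x + (1 + x) * x⁻¹ - 2 by ring]
  exact this

lemma qF_mono : MonotoneOn qF (Set.Ioi (0:ℝ)) := by
  apply monotoneOn_of_deriv_nonneg (convex_Ioi 0)
  · intro x hx
    exact (hasDerivAt_qF hx).continuousAt.continuousWithinAt
  · intro x hx
    rw [interior_Ioi] at hx
    exact (hasDerivAt_qF hx).differentiableAt.differentiableWithinAt
  · intro x hx
    rw [interior_Ioi] at hx
    rw [(hasDerivAt_qF hx).deriv]
    have h := Real.log_le_sub_one_of_pos (x := 1/x) (one_div_pos.2 hx)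
    rw [one_div, Real.log_inv] at h
    have hx' : (1 + x) / x = 1/x + 1 := by rw [add_div, div_self hx.ne']
    rw [hx', one_div]
    linarith

lemma qF_nonpos {t : ℝ} (ht : 0 < t) (ht1 : t ≤ 1) : qF t ≤ 0 := by
  have := qF_mono (Set.mem_Ioi.2 ht) (Set.mem_Ioi.2 one_pos) ht1
  simpa [qF] using this

lemma qF_nonneg {t : ℝ} (ht : 1 ≤ t) : 0 ≤ qF t := by
  have := qF_mono (Set.mem_Ioi.2 one_pos) (Set.mem_Ioi.2 (lt_of_lt_of_le one_pos ht)) ht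
  simpa [qF] using this

/-- `phiF t ≤ psiF t` for `0 < t ≤ 1`. -/
lemma phiF_le_psiF {t : ℝ} (ht : 0 < t) (ht1 : t ≤ 1) : phiF t ≤ psiF t := by
  have h := qF_nonpos ht ht1
  simp only [qF, phiF, psiF] at *
  nlinarith

/-- `psiF t ≤ phiF t` for `1 ≤ t`. -/
lemma psiF_le_phiF {t : ℝ} (ht : 1 ≤ t) : psiF t ≤ phiF t := by
  have h := qF_nonneg ht
  simp only [qF, phiF, psiF] at *
  nlinarith

/-- `s - 1/s - 2 log s` -/
noncomputable def fF (s : ℝ) : ℝ := s - 1/s - 2 * Real.log s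

lemma hasDerivAt_fF {x : ℝ} (hx : 0 < x) :
    HasDerivAt fF (1 - (-(1 / x ^ 2)) - 2 * x⁻¹) x := by
  have h1 : HasDerivAt (fun t : ℝ => 1/t) (-(1/x^2)) x := by
    simpa using (hasDerivAt_inv hx.ne')
  have h2 : HasDerivAt (fun t : ℝ => 2 * Real.log t) (2 * x⁻¹) x :=
    (Real.hasDerivAt_log hx.ne').const_mul 2
  exact ((hasDerivAt_id x).sub h1).sub h2

lemma fF_mono : MonotoneOn fF (Set.Ioi (0:ℝ)) := by
  apply monotoneOn_of_deriv_nonneg (convex_Ioi 0)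
  · intro x hx
    exact (hasDerivAt_fF hx).continuousAt.continuousWithinAt
  · intro x hx
    rw [interior_Ioi] at hx
    exact (hasDerivAt_fF hx).differentiableAt.differentiableWithinAt
  · intro x hx
    rw [interior_Ioi] at hx
    rw [(hasDerivAt_fF hx).deriv]
    have h : 1 - (-(1 / x ^ 2)) - 2 * x⁻¹ = (x - 1)^2 / x^2 := by
      have hx0 : x ≠ 0 := hx.ne'
      field_simp
      ring
    rw [h]; positivity

lemma two_log_le {s : ℝ} (hs : 1 ≤ s) : 2 * Real.log s ≤ s - 1/s := by
  have := fF_mono (Set.mem_Ioi.2 one_pos)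
    (Set.mem_Ioi.2 (lt_of_lt_of_le one_pos hs)) hs
  simp only [fF, Real.log_one] at this
  linarith

lemma sqrt_mul_log_le {t : ℝ} (ht : 1 ≤ t) : Real.sqrt t * Real.log t ≤ t - 1 := by
  set s := Real.sqrt t with hs
  have hs1 : 1 ≤ s := by
    rw [hs, show (1:ℝ) = Real.sqrt 1 by simp]
    exact Real.sqrt_le_sqrt ht
  have hs0 : 0 < s := lt_of_lt_of_le one_pos hs1
  have hst : s * s = t := Real.mul_self_sqrt (by linarith)
  have hlog : Real.log t = 2 * Real.log s := by
    rw [← hst, Real.log_mul hs0.ne' hs0.ne']; ring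
  have h := two_log_le hs1
  rw [hlog]
  calc s * (2 * Real.log s) ≤ s * (s - 1/s) := by
        apply mul_le_mul_of_nonneg_left h hs0.le
    _ = t - 1 := by field_simp [hst]; rw [← hst]; ring
  
lemma key_ineq {t : ℝ} (ht : 1 ≤ t) : t * (Real.log t)^2 ≤ (t - 1)^2 := by
  have h1 : 0 ≤ Real.sqrt t * Real.log t := by
    apply mul_nonneg (Real.sqrt_nonneg t)
    exact Real.log_nonneg ht
  have h2 := sqrt_mul_log_le ht
  have h3 : (Real.sqrt t * Real.log t)^2 ≤ (t-1)^2 := by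
    apply sq_le_sq' (by linarith) h2
  have hst : Real.sqrt t * Real.sqrt t = t := Real.mul_self_sqrt (by linarith)
  nlinarith

/-- ratio phi/psi is monotone on (1, ∞) -/
lemma ratio_mono : MonotoneOn (fun t => phiF t / psiF t) (Set.Ioi (1:ℝ)) := by
  have hdiff : ∀ x ∈ Set.Ioi (1:ℝ), HasDerivAt (fun t => phiF t / psiF t)
      ((Real.log x * psiF x - phiF x * (1 - x⁻¹)) / (psiF x)^2) x := by
    intro x hx
    have hx1 : 1 < x := hx
    have hx0 : 0 < x := lt_trans one_pos hx1
    have hphi : HasDerivAt phiF (Real.log x) x := by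
      have h1 : HasDerivAt (fun t : ℝ => t * Real.log t)
          (1 * Real.log x + x * x⁻¹) x :=
        (hasDerivAt_id x).mul (Real.hasDerivAt_log hx0.ne')
      have h2 := (h1.add_const 1).sub (hasDerivAt_id x)
      have he : 1 * Real.log x + x * x⁻¹ - 1 = Real.log x := by
        rw [mul_inv_cancel₀ hx0.ne']; ring
      rw [← he]
      exact h2
    have hpsi : HasDerivAt psiF (1 - x⁻¹) x :=
      ((hasDerivAt_id x).sub_const 1).sub (Real.hasDerivAt_log hx0.ne')
    exact hphi.div hpsi (psiF_pos hx0 hx1.ne').ne'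
  apply monotoneOn_of_deriv_nonneg (convex_Ioi 1)
  · intro x hx
    exact (hdiff x hx).continuousAt.continuousWithinAt
  · intro x hx
    rw [interior_Ioi] at hx
    exact (hdiff x hx).differentiableAt.differentiableWithinAt
  · intro x hx
    rw [interior_Ioi] at hx
    rw [(hdiff x hx).deriv]
    have hx1 : 1 < x := hx
    have hx0 : 0 < x := lt_trans one_pos hx1
    apply div_nonneg _ (sq_nonneg _)
    have hkey := key_ineq hx1.le
    have hnum : x * (Real.log x * psiF x - phiF x * (1 - x⁻¹)) =
        (x - 1)^2 - x * (Real.log x)^2 := by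
      simp only [phiF, psiF]
      field_simp
      ring
    nlinarith

/-- Pointwise inequality: for `0 < t ≤ M` with `1 < M`,
`phiF t ≤ (phiF M / psiF M) * psiF t`. -/
lemma pointwise_ineq {t M : ℝ} (hM : 1 < M) (ht : 0 < t) (htM : t ≤ M) :
    phiF t ≤ (phiF M / psiF M) * psiF t := by
  have hM0 : 0 < M := lt_trans one_pos hM
  have hpsiM : 0 < psiF M := psiF_pos hM0 hM.ne'
  have hkM : 1 ≤ phiF M / psiF M := by
    rw [le_div_iff₀ hpsiM, one_mul]
    exact psiF_le_phiF hM.le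
  rcases le_or_gt t 1 with h1 | h1
  · calc phiF t ≤ psiF t := phiF_le_psiF ht h1
      _ = 1 * psiF t := (one_mul _).symm
      _ ≤ (phiF M / psiF M) * psiF t :=
        mul_le_mul_of_nonneg_right hkM (psiF_nonneg ht)
  · have hpsit : 0 < psiF t := psiF_pos ht h1.ne'
    have hmono := ratio_mono (Set.mem_Ioi.2 h1) (Set.mem_Ioi.2 hM) htM
    calc phiF t = (phiF t / psiF t) * psiF t := by field_simp
      _ ≤ (phiF M / psiF M) * psiF t :=
          mul_le_mul_of_nonneg_right hmono hpsit.le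

end Aux

/-- RKL/FKL ratio bound: for mutually absolutely continuous probability
distributions `P ≠ Q` on a finite set, with `β₁ = exp(−D_∞(P‖Q))`,
`KL(P‖Q) ≤ κ(β₁⁻¹)·KL(Q‖P)`, where `β₁⁻¹ = exp(D_∞(P‖Q))` and
`D_∞(P‖Q) = log maxᵢ pᵢ/qᵢ`. -/
theorem kl_ratio_bound
    {ι : Type*} [Fintype ι] [Nonempty ι]
    (P Q : ι → ℝ) (hP0 : ∀ i, 0 ≤ P i) (hQ0 : ∀ i, 0 ≤ Q i)
    (hP1 : ∑ i, P i = 1) (hQ1 : ∑ i, Q i = 1)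
    (hac : ∀ i, P i = 0 ↔ Q i = 0) (hne : P ≠ Q) :
    (∑ i, P i * Real.log (P i / Q i)) ≤
      kappa (Real.exp (Real.log
          (Finset.univ.sup' Finset.univ_nonempty fun i => P i / Q i)))
        * ∑ i, Q i * Real.log (Q i / P i) := by
  set M := Finset.univ.sup' Finset.univ_nonempty fun i => P i / Q i with hMdef
  -- there is an index where P i > Q i
  obtain ⟨j, hj⟩ : ∃ j, Q j < P j := by
    by_contra h
    push_neg at h
    apply hne
    funext i
    have hsum : ∑ i, (Q i - P i) = 0 := by
      rw [Finset.sum_sub_distrib, hP1, hQ1]; ring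
    have := (Finset.sum_eq_zero_iff_of_nonneg
      (fun i _ => by linarith [h i] : ∀ i ∈ Finset.univ, 0 ≤ Q i - P i)).1 hsum
    have := this i (Finset.mem_univ i)
    linarith
  have hQj : 0 < Q j := by
    rcases (hQ0 j).lt_or_eq with h | h
    · exact h
    · exfalso
      have : P j = 0 := (hac j).2 h.symm
      rw [this, ← h] at hj; exact lt_irrefl 0 hj
  have hM1 : 1 < M := by
    have hle : P j / Q j ≤ M := Finset.le_sup' (fun i => P i / Q i) (Finset.mem_univ j)
    have : 1 < P j / Q j := (one_lt_div hQj).2 hj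
    linarith
  have hM0 : 0 < M := lt_trans one_pos hM1
  rw [Real.exp_log hM0]
  have hkappa : kappa M = phiF M / psiF M := by
    simp [kappa, phiF, psiF]
  rw [hkappa]
  -- rewrite both KL divergences
  have hKL1 : ∑ i, P i * Real.log (P i / Q i) = ∑ i, Q i * phiF (P i / Q i) := by
    have : ∀ i, Q i * phiF (P i / Q i) = P i * Real.log (P i / Q i) + (Q i - P i) := by
      intro i
      rcases (hQ0 i).lt_or_eq with h | h
      · have hPi := (hQ0 i)
        simp only [phiF]
        field_simp
        ring
      · have hQi : Q i = 0 := h.symm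
        have hPi : P i = 0 := (hac i).2 hQi
        simp [hQi, hPi, phiF]
    rw [Finset.sum_congr rfl (fun i _ => this i), Finset.sum_add_distrib,
      Finset.sum_sub_distrib, hP1, hQ1]
    ring
  have hKL2 : ∑ i, Q i * Real.log (Q i / P i) = ∑ i, Q i * psiF (P i / Q i) := by
    have : ∀ i, Q i * psiF (P i / Q i) = Q i * Real.log (Q i / P i) + (P i - Q i) := by
      intro i
      rcases (hQ0 i).lt_or_eq with h | h
      · have hPi : 0 < P i := by
          rcases (hP0 i).lt_or_eq with h' | h'
          · exact h'
          · exfalso; exact h.ne' ((hac i).1 h'.symm)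
        simp only [psiF]
        rw [Real.log_div hPi.ne' h.ne', Real.log_div h.ne' hPi.ne']
        field_simp
        ring
      · have hQi : Q i = 0 := h.symm
        have hPi : P i = 0 := (hac i).2 hQi
        simp [hQi, hPi, psiF]
    rw [Finset.sum_congr rfl (fun i _ => this i), Finset.sum_add_distrib,
      Finset.sum_sub_distrib, hP1, hQ1]
    ring
  rw [hKL1, hKL2, Finset.mul_sum]
  apply Finset.sum_le_sum
  intro i _
  rcases (hQ0 i).lt_or_eq with h | h
  · have hPi : 0 < P i := by
      rcases (hP0 i).lt_or_eq with h' | h'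
      · exact h'
      · exfalso; exact h.ne' ((hac i).1 h'.symm)
    have ht : 0 < P i / Q i := div_pos hPi h
    have htM : P i / Q i ≤ M := Finset.le_sup' (fun i => P i / Q i) (Finset.mem_univ i)
    have := pointwise_ineq hM1 ht htM
    calc Q i * phiF (P i / Q i) ≤ Q i * ((phiF M / psiF M) * psiF (P i / Q i)) :=
          mul_le_mul_of_nonneg_left this h.le
      _ = phiF M / psiF M * (Q i * psiF (P i / Q i)) := by ring
  · have hQi : Q i = 0 := h.symm
    simp [hQi]
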